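/- Let X be an order-N real tensor of shape (I_1,…,I_N) and r = (R_1,…,R_N) a core shape with 1 ≤ R_n ≤ I_n. For every core tensor G ∈ ℝ^{R_1×⋯×R_N} and factor matrices A^(n) ∈ ℝ^{I_n×R_n} (n = 1,…,N), the reconstruction X̂ = G ×_1 A^(1) ×_2 ⋯ ×_N A^(N) satisfies ‖X − X̂‖_F² ≥ max_{n∈[N]} Σ_{i=R_n+1}^{I_n} (σ_i^(n))². Consequently L(X,r) ≥ max_{n∈[N]} Σ_{i=R_n+1}^{I_n} (σ_i^(n))². -/

import Mathlib

open scoped BigOperators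
open Matrix

/-- Combine a fixed `n`-th coordinate with coordinates for the remaining modes. -/
def fullIdx {N : ℕ} {I : Fin N → ℕ} (n : Fin N) (i : Fin (I n))
    (j : ∀ m : {m : Fin N // m ≠ n}, Fin (I m.1)) : ∀ k, Fin (I k) :=
  fun k => if h : k = n then Fin.cast (congrArg I h).symm i else j ⟨k, h⟩

/-- Mode-`n` unfolding of a tensor. -/
def modeUnfold {N : ℕ} {I : Fin N → ℕ} (X : (∀ k, Fin (I k)) → ℝ) (n : Fin N) :
    Matrix (Fin (I n)) (∀ m : {m : Fin N // m ≠ n}, Fin (I m.1)) ℝ :=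
  fun i j => X (fullIdx n i j)

/-- Squared Frobenius norm of a tensor. -/
noncomputable def frobSq {N : ℕ} {I : Fin N → ℕ} (X : (∀ k, Fin (I k)) → ℝ) : ℝ :=
  ∑ i : ∀ k, Fin (I k), (X i) ^ 2

/-- Tucker/multilinear reconstruction `G ×₁ A 1 ×₂ ⋯ ×_N A N`. -/
noncomputable def tucker {N : ℕ} {I R : Fin N → ℕ} (G : (∀ k, Fin (R k)) → ℝ)
    (A : ∀ n, Matrix (Fin (I n)) (Fin (R n)) ℝ) : (∀ k, Fin (I k)) → ℝ :=
  fun i => ∑ j : ∀ k, Fin (R k), G j * ∏ n, A n (i n) (j n)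

/-- Optimal rank-`R` Tucker loss `L(X, R)`. -/
noncomputable def tuckerLoss {N : ℕ} (I : Fin N → ℕ) (X : (∀ k, Fin (I k)) → ℝ)
    (R : Fin N → ℕ) : ℝ :=
  sInf {v : ℝ | ∃ (G : (∀ k, Fin (R k)) → ℝ)
    (A : ∀ n, Matrix (Fin (I n)) (Fin (R n)) ℝ),
    v = frobSq (fun i => X i - tucker G A i)}

/-- `σ` lists the singular values of `M` in nonincreasing order:
entries are nonnegative, nonincreasing, and their squares are the eigenvalues
of the positive semidefinite matrix `M * Mᵀ` (up to a permutation). -/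
def IsSingularValues {k : ℕ} {c : Type*} [Fintype c]
    (M : Matrix (Fin k) c ℝ) (σ : Fin k → ℝ) : Prop :=
  (∀ i, 0 ≤ σ i) ∧ Antitone σ ∧
    ∃ e : Equiv.Perm (Fin k), ∀ i, σ i ^ 2 =
      (Matrix.isHermitian_mul_conjTranspose_self M).eigenvalues (e i)

/-- Truncation of a tensor to the leading `R`-block. -/
def truncate {N : ℕ} {I : Fin N → ℕ} (S : (∀ k, Fin (I k)) → ℝ)
    (R : Fin N → ℕ) : (∀ k, Fin (I k)) → ℝ :=
  fun i => if ∀ n, (i n : ℕ) < R n then S i else 0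

/-- Surrogate loss `L̃(X, R)`: sum of the squared tail singular values. -/
noncomputable def surrLoss {N : ℕ} {I : Fin N → ℕ} (σ : ∀ n, Fin (I n) → ℝ)
    (R : Fin N → ℕ) : ℝ :=
  ∑ n, ∑ i ∈ Finset.univ.filter (fun i : Fin (I n) => R n ≤ (i : ℕ)), σ n i ^ 2

/-- Packing objective: sum of the squared leading singular values. -/
noncomputable def packObj {N : ℕ} {I : Fin N → ℕ} (σ : ∀ n, Fin (I n) → ℝ)
    (R : Fin N → ℕ) : ℝ :=
  ∑ n, ∑ i ∈ Finset.univ.filter (fun i : Fin (I n) => (i : ℕ) < R n), σ n i ^ 2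

section AuxLemmas

lemma card_tail_aux {k R : ℕ} (hRk : R ≤ k) :
    (Finset.univ.filter (fun i : Fin k => R ≤ (i : ℕ))).card = k - R := by
  have e : {i : Fin k // (i : ℕ) < R} ≃ Fin R :=
    { toFun := fun i => ⟨i.1, i.2⟩
      invFun := fun j => ⟨⟨j, lt_of_lt_of_le j.2 hRk⟩, j.2⟩
      left_inv := fun i => by ext; rfl
      right_inv := fun j => rfl }
  have hc : (Finset.univ.filter (fun i : Fin k => (i : ℕ) < R)).card = R := by
    rw [← Fintype.card_subtype, Fintype.card_congr e, Fintype.card_fin]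
  have hcompl : (Finset.univ.filter (fun i : Fin k => R ≤ (i : ℕ))) =
      (Finset.univ.filter (fun i : Fin k => (i : ℕ) < R))ᶜ := by
    ext i; simp [not_lt]
  rw [hcompl, Finset.card_compl, hc, Fintype.card_fin]

/-- Threshold rearrangement lemma. -/
lemma tail_sum_le_aux {k R : ℕ} (hRk : R ≤ k) (lam t : Fin k → ℝ)
    (hanti : Antitone lam) (hlam0 : ∀ i, 0 ≤ lam i)
    (ht0 : ∀ i, 0 ≤ t i) (ht1 : ∀ i, t i ≤ 1)
    (hsum : ∑ i, t i = (k - R : ℕ)) :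
    ∑ i ∈ Finset.univ.filter (fun i : Fin k => R ≤ (i : ℕ)), lam i ≤ ∑ i, lam i * t i := by
  rcases eq_or_lt_of_le hRk with h | h
  · have : (Finset.univ.filter (fun i : Fin k => R ≤ (i : ℕ))) = ∅ := by
      ext i; simp; omega
    rw [this]
    simp only [Finset.sum_empty]
    exact Finset.sum_nonneg fun i _ => mul_nonneg (hlam0 i) (ht0 i)
  · set S := Finset.univ.filter (fun i : Fin k => R ≤ (i : ℕ)) with hS
    set lstar : ℝ := lam ⟨R, h⟩ with hl
    have hsplit : ∑ i, lam i * t i = ∑ i ∈ Sᶜ, lam i * t i + ∑ i ∈ S, lam i * t i := by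
      rw [Finset.sum_compl_add_sum]
    have hcard : (S.card : ℝ) = ((k - R : ℕ) : ℝ) := by rw [hS, card_tail_aux hRk]
    have hkey : ∑ i ∈ S, (1 - t i) = ∑ i ∈ Sᶜ, t i := by
      have h1 : ∑ i ∈ S, (1 - t i) = (S.card : ℝ) - ∑ i ∈ S, t i := by
        rw [Finset.sum_sub_distrib, Finset.sum_const, nsmul_eq_mul, mul_one]
      have h2 := Finset.sum_compl_add_sum S t
      rw [h1, hcard]
      linarith [hsum]
    have hub : ∑ i ∈ S, lam i * (1 - t i) ≤ lstar * ∑ i ∈ S, (1 - t i) := by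
      rw [Finset.mul_sum]
      apply Finset.sum_le_sum
      intro i hi
      have hiR : R ≤ (i : ℕ) := by simpa [hS] using hi
      have hle : lam i ≤ lstar := hanti (by simpa [Fin.le_def] using hiR)
      exact mul_le_mul_of_nonneg_right hle (by linarith [ht1 i])
    have hlb : lstar * ∑ i ∈ Sᶜ, t i ≤ ∑ i ∈ Sᶜ, lam i * t i := by
      rw [Finset.mul_sum]
      apply Finset.sum_le_sum
      intro i hi
      have hiR : (i : ℕ) < R := by
        simp only [hS, Finset.mem_compl, Finset.mem_filter, Finset.mem_univ, true_and,
          not_le] at hi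
        exact hi
      have hle : lstar ≤ lam i := hanti (by simpa [Fin.le_def] using hiR.le)
      exact mul_le_mul_of_nonneg_right hle (ht0 i)
    have hdecomp : ∑ i ∈ S, lam i = ∑ i ∈ S, lam i * (1 - t i) + ∑ i ∈ S, lam i * t i := by
      rw [← Finset.sum_add_distrib]
      exact Finset.sum_congr rfl fun i _ => by ring
    rw [hsplit, hdecomp]
    have := hub.trans_eq (by rw [hkey])
    linarith

/-- An orthonormal family of size `k - R` annihilating the columns of `A`. -/
lemma exists_on_family_aux {k R : ℕ} (hRk : R ≤ k) (A : Matrix (Fin k) (Fin R) ℝ) :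
    ∃ v : Fin (k - R) → EuclideanSpace ℝ (Fin k),
      Orthonormal ℝ v ∧ ∀ s, Matrix.vecMul (v s) A = 0 := by
  classical
  let f : EuclideanSpace ℝ (Fin k) →ₗ[ℝ] (Fin R → ℝ) :=
    A.vecMulLinear ∘ₗ (WithLp.linearEquiv 2 ℝ (∀ _ : Fin k, ℝ)).toLinearMap
  have h1 := LinearMap.finrank_range_add_finrank_ker f
  have h2 : Module.finrank ℝ (LinearMap.range f) ≤ R := by
    have := Submodule.finrank_le (LinearMap.range f)
    simpa using this
  have hdom : Module.finrank ℝ (EuclideanSpace ℝ (Fin k)) = k := by simp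
  rw [hdom] at h1
  have hd : k - R ≤ Module.finrank ℝ (LinearMap.ker f) := by omega
  let b := stdOrthonormalBasis ℝ (LinearMap.ker f)
  refine ⟨fun s => (b (Fin.castLE hd s) : EuclideanSpace ℝ (Fin k)), ?_, ?_⟩
  · rw [orthonormal_iff_ite]
    intro i j
    have hb := b.orthonormal
    rw [orthonormal_iff_ite] at hb
    have := hb (Fin.castLE hd i) (Fin.castLE hd j)
    rw [← Submodule.coe_inner]
    simpa [Fin.castLE_inj] using this
  · intro s
    have hmem : (b (Fin.castLE hd s) : EuclideanSpace ℝ (Fin k)) ∈ LinearMap.ker f :=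
      (b (Fin.castLE hd s)).2
    rw [LinearMap.mem_ker] at hmem
    have h3 : A.vecMulLinear ((b (Fin.castLE hd s) : EuclideanSpace ℝ (Fin k))) = 0 := hmem
    exact h3

/-- Quadratic form of `M * Mᴴ` in the eigenbasis. -/
lemma quad_form_aux {k : ℕ} {c : Type*} [Fintype c] (M : Matrix (Fin k) c ℝ)
    (w : EuclideanSpace ℝ (Fin k)) :
    ∑ j, (∑ i, w i * M i j)^2 =
      ∑ p, (Matrix.isHermitian_mul_conjTranspose_self M).eigenvalues p *
        (inner ℝ ((Matrix.isHermitian_mul_conjTranspose_self M).eigenvectorBasis p) w : ℝ)^2 := by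
  classical
  set hH := Matrix.isHermitian_mul_conjTranspose_self M with hHdef
  set U : Matrix (Fin k) (Fin k) ℝ := (hH.eigenvectorUnitary : Matrix (Fin k) (Fin k) ℝ) with hU
  have hHentry : ∀ i i', (M * Mᴴ) i i' = ∑ p, U i p * hH.eigenvalues p * U i' p := by
    intro i i'
    have h0 := congrFun (congrFun hH.spectral_theorem i) i'
    rw [h0, Unitary.conjStarAlgAut_apply, Matrix.mul_apply]
    refine Finset.sum_congr rfl fun p _ => ?_
    rw [Matrix.mul_diagonal]
    simp [Matrix.star_apply, hU]
  have hinner : ∀ p, (inner ℝ (hH.eigenvectorBasis p) w : ℝ) = ∑ i, U i p * w i := by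
    intro p
    rw [PiLp.inner_apply]
    refine Finset.sum_congr rfl fun i _ => ?_
    simp [hU, Matrix.IsHermitian.eigenvectorUnitary_apply]; ring
  calc ∑ j, (∑ i, w i * M i j)^2
      = ∑ j, ∑ i, ∑ i', (w i * M i j) * (w i' * M i' j) := by
        refine Finset.sum_congr rfl fun j _ => ?_
        rw [sq, Finset.sum_mul_sum]
    _ = ∑ i, ∑ i', w i * w i' * ∑ j, M i j * M i' j := by
        rw [Finset.sum_comm]
        refine Finset.sum_congr rfl fun i _ => ?_
        rw [Finset.sum_comm]
        refine Finset.sum_congr rfl fun i' _ => ?_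
        rw [Finset.mul_sum]
        exact Finset.sum_congr rfl fun j _ => by ring
    _ = ∑ i, ∑ i', ∑ p, w i * w i' * (U i p * hH.eigenvalues p * U i' p) := by
        refine Finset.sum_congr rfl fun i _ => Finset.sum_congr rfl fun i' _ => ?_
        have : ∑ j, M i j * M i' j = (M * Mᴴ) i i' := by
          rw [Matrix.mul_apply]
          exact Finset.sum_congr rfl fun j _ => by simp [Matrix.conjTranspose_apply]
        rw [this, hHentry, Finset.mul_sum]
    _ = ∑ i, ∑ p, ∑ i', w i * w i' * (U i p * hH.eigenvalues p * U i' p) :=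
        Finset.sum_congr rfl fun i _ => Finset.sum_comm
    _ = ∑ p, ∑ i, ∑ i', w i * w i' * (U i p * hH.eigenvalues p * U i' p) :=
        Finset.sum_comm
    _ = ∑ p, hH.eigenvalues p * (∑ i, U i p * w i)^2 := by
        refine Finset.sum_congr rfl fun p _ => ?_
        rw [sq, Finset.sum_mul_sum, Finset.mul_sum]
        refine Finset.sum_congr rfl fun i _ => ?_
        rw [Finset.mul_sum]
        refine Finset.sum_congr rfl fun i' _ => ?_
        ring
    _ = ∑ p, hH.eigenvalues p * (inner ℝ (hH.eigenvectorBasis p) w : ℝ)^2 := by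
        refine Finset.sum_congr rfl fun p _ => ?_
        rw [hinner]

/-- Eckart–Young type lower bound: subtracting a matrix of rank at most `R`
leaves at least the tail eigenvalue mass. -/
theorem key_matrix_aux {k R : ℕ} {c : Type*} [Fintype c] (hRk : R ≤ k)
    (M Y : Matrix (Fin k) c ℝ) (σ : Fin k → ℝ) (hσ : IsSingularValues M σ)
    (A : Matrix (Fin k) (Fin R) ℝ) (B : Matrix (Fin R) c ℝ) (hY : Y = A * B) :
    ∑ i ∈ Finset.univ.filter (fun i : Fin k => R ≤ (i : ℕ)), σ i ^ 2 ≤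
      ∑ i, ∑ j, (M i j - Y i j)^2 := by
  classical
  obtain ⟨v, hv, hvA⟩ := exists_on_family_aux hRk A
  set hH := Matrix.isHermitian_mul_conjTranspose_self M with hHdef
  set u := hH.eigenvectorBasis with hu
  set μ := hH.eigenvalues with hμ
  set t : Fin k → ℝ := fun p => ∑ s, (inner ℝ (u p) (v s) : ℝ)^2 with ht
  have hYzero : ∀ s j, ∑ i, v s i * Y i j = 0 := by
    intro s j
    rw [hY]
    calc ∑ i, v s i * (A * B) i j = ∑ i, ∑ r, v s i * (A i r * B r j) := by
          refine Finset.sum_congr rfl fun i _ => ?_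
          rw [Matrix.mul_apply, Finset.mul_sum]
      _ = ∑ r, (∑ i, v s i * A i r) * B r j := by
          rw [Finset.sum_comm]
          refine Finset.sum_congr rfl fun r _ => ?_
          rw [Finset.sum_mul]
          exact Finset.sum_congr rfl fun i _ => by ring
      _ = 0 := by
          refine Finset.sum_eq_zero fun r _ => ?_
          have : Matrix.vecMul (v s) A r = 0 := by rw [hvA s]; rfl
          rw [Matrix.vecMul, dotProduct] at this
          rw [this, zero_mul]
  have step1 : ∑ s, ∑ j, (∑ i, v s i * M i j)^2 ≤ ∑ i, ∑ j, (M i j - Y i j)^2 := by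
    rw [Finset.sum_comm (γ := Fin (k - R)), Finset.sum_comm (γ := Fin k)]
    refine Finset.sum_le_sum fun j _ => ?_
    set x : EuclideanSpace ℝ (Fin k) := WithLp.toLp 2 (fun i => M i j - Y i j) with hx
    have hb := hv.sum_inner_products_le (s := Finset.univ) x
    have h1 : ∑ s, ‖(inner ℝ (v s) x : ℝ)‖^2 = ∑ s, (∑ i, v s i * M i j)^2 := by
      refine Finset.sum_congr rfl fun s _ => ?_
      rw [Real.norm_eq_abs, sq_abs]
      congr 1
      rw [PiLp.inner_apply]
      have : ∑ i, v s i * x i = ∑ i, v s i * M i j - ∑ i, v s i * Y i j := by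
        rw [← Finset.sum_sub_distrib]
        exact Finset.sum_congr rfl fun i _ => by rw [hx, PiLp.toLp_apply]; ring
      calc (∑ i, inner ℝ (v s i) (x i)) = ∑ i, v s i * x i := by
            refine Finset.sum_congr rfl fun i _ => by simp [mul_comm]
        _ = ∑ i, v s i * M i j := by rw [this, hYzero s j, sub_zero]
    have h2 : ‖x‖^2 = ∑ i, (M i j - Y i j)^2 := by
      rw [← real_inner_self_eq_norm_sq, PiLp.inner_apply]
      refine Finset.sum_congr rfl fun i _ => by simp [hx, sq]
    rw [h1, h2] at hb
    exact hb
  have step2 : ∑ s, ∑ j, (∑ i, v s i * M i j)^2 = ∑ p, μ p * t p := by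
    calc ∑ s, ∑ j, (∑ i, v s i * M i j)^2
        = ∑ s, ∑ p, μ p * (inner ℝ (u p) (v s) : ℝ)^2 :=
          Finset.sum_congr rfl fun s _ => quad_form_aux M (v s)
      _ = ∑ p, ∑ s, μ p * (inner ℝ (u p) (v s) : ℝ)^2 := Finset.sum_comm
      _ = ∑ p, μ p * t p := by
          refine Finset.sum_congr rfl fun p _ => ?_
          rw [ht, Finset.mul_sum]
  have ht0 : ∀ p, 0 ≤ t p := fun p => Finset.sum_nonneg fun s _ => sq_nonneg _
  have ht1 : ∀ p, t p ≤ 1 := by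
    intro p
    have hb := hv.sum_inner_products_le (s := Finset.univ) (u p)
    have hnorm : ‖(u p : EuclideanSpace ℝ (Fin k))‖ = 1 := u.orthonormal.1 p
    have : ∑ s, ‖(inner ℝ (v s) (u p) : ℝ)‖^2 = t p := by
      refine Finset.sum_congr rfl fun s _ => ?_
      rw [Real.norm_eq_abs, sq_abs, real_inner_comm]
    rw [this, hnorm] at hb
    simpa using hb
  have htsum : ∑ p, t p = ((k - R : ℕ) : ℝ) := by
    calc ∑ p, t p = ∑ s, ∑ p, (inner ℝ (u p) (v s) : ℝ)^2 := Finset.sum_comm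
      _ = ∑ s : Fin (k - R), (1 : ℝ) := by
          refine Finset.sum_congr rfl fun s _ => ?_
          have hpar := u.sum_inner_mul_inner (v s) (v s)
          have : ∀ p, (inner ℝ (u p) (v s) : ℝ)^2 =
              (inner ℝ (v s) (u p) : ℝ) * (inner ℝ (u p) (v s) : ℝ) := by
            intro p; rw [sq, real_inner_comm]
          rw [Finset.sum_congr rfl fun p _ => this p, hpar]
          have := hv.1 s
          rw [real_inner_self_eq_norm_sq, this]
          norm_num
      _ = ((k - R : ℕ) : ℝ) := by simp
  obtain ⟨hσ0, hσanti, e, he⟩ := hσ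
  have hperm : ∑ p, μ p * t p = ∑ p, σ p ^ 2 * t (e p) := by
    rw [← Equiv.sum_comp e (fun p => μ p * t p)]
    exact Finset.sum_congr rfl fun p _ => by rw [he p]
  have happ := tail_sum_le_aux hRk (fun p => σ p ^ 2) (fun p => t (e p))
    (fun i j hij => pow_le_pow_left₀ (hσ0 j) (hσanti hij) 2)
    (fun i => sq_nonneg _) (fun i => ht0 _) (fun i => ht1 _)
    (by rw [Equiv.sum_comp e t, htsum])
  calc ∑ i ∈ Finset.univ.filter (fun i : Fin k => R ≤ (i : ℕ)), σ i ^ 2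
      ≤ ∑ p, σ p ^ 2 * t (e p) := happ
    _ = ∑ p, μ p * t p := hperm.symm
    _ = ∑ s, ∑ j, (∑ i, v s i * M i j)^2 := step2.symm
    _ ≤ ∑ i, ∑ j, (M i j - Y i j)^2 := step1

lemma fullIdx_same {N : ℕ} {I : Fin N → ℕ} (n : Fin N) (i : Fin (I n))
    (j : ∀ m : {m : Fin N // m ≠ n}, Fin (I m.1)) : fullIdx n i j n = i := by
  simp only [fullIdx, dif_pos]
  exact Fin.ext rfl

lemma fullIdx_ne {N : ℕ} {I : Fin N → ℕ} (n : Fin N) (i : Fin (I n))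
    (j : ∀ m : {m : Fin N // m ≠ n}, Fin (I m.1)) (m : Fin N) (h : m ≠ n) :
    fullIdx n i j m = j ⟨m, h⟩ := by
  simp only [fullIdx, dif_neg h]

lemma fullIdx_symm {N : ℕ} {I : Fin N → ℕ} (n : Fin N) (i : Fin (I n))
    (j : ∀ m : {m : Fin N // m ≠ n}, Fin (I m.1)) :
    fullIdx n i j = (Equiv.piSplitAt n (fun k => Fin (I k))).symm (i, j) := by
  funext k
  by_cases h : k = n
  · subst h
    rw [fullIdx_same]
    simp [Equiv.piSplitAt]
  · rw [fullIdx_ne n i j k h]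
    simp [Equiv.piSplitAt, h]

lemma frobSq_unfold {N : ℕ} {I : Fin N → ℕ} (T : (∀ k, Fin (I k)) → ℝ) (n : Fin N) :
    frobSq T = ∑ i, ∑ j, (modeUnfold T n i j)^2 := by
  rw [frobSq, ← Equiv.sum_comp (Equiv.piSplitAt n (fun k => Fin (I k))).symm
    (fun p => T p ^ 2), Fintype.sum_prod_type]
  refine Finset.sum_congr rfl fun i _ => Finset.sum_congr rfl fun j _ => ?_
  rw [modeUnfold, fullIdx_symm]

lemma modeUnfold_tucker {N : ℕ} {I R : Fin N → ℕ} (G : (∀ k, Fin (R k)) → ℝ)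
    (A : ∀ n, Matrix (Fin (I n)) (Fin (R n)) ℝ) (n : Fin N) :
    modeUnfold (tucker G A) n = (A n) *
      (Matrix.of fun c (j : ∀ m : {m : Fin N // m ≠ n}, Fin (I m.1)) =>
        ∑ g : ∀ m : {m : Fin N // m ≠ n}, Fin (R m.1),
          G (fullIdx n c g) * ∏ m : {m : Fin N // m ≠ n}, A m.1 (j m) (g m)) := by
  funext i j
  show tucker G A (fullIdx n i j) = _
  rw [tucker, Matrix.mul_apply]
  rw [← Equiv.sum_comp (Equiv.piSplitAt n (fun k => Fin (R k))).symm
    (fun q => G q * ∏ m, A m (fullIdx n i j m) (q m)), Fintype.sum_prod_type]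
  refine Finset.sum_congr rfl fun c _ => ?_
  rw [Matrix.of_apply, Finset.mul_sum]
  refine Finset.sum_congr rfl fun g _ => ?_
  rw [← fullIdx_symm]
  have hprod : ∏ m, A m (fullIdx n i j m) (fullIdx n c g m) =
      A n i c * ∏ m : {m : Fin N // m ≠ n}, A m.1 (j m) (g m) := by
    rw [Finset.prod_eq_mul_prod_sdiff_singleton_of_mem (Finset.mem_univ n)]
    congr 1
    · rw [fullIdx_same, fullIdx_same]
    · rw [Finset.prod_subtype (Finset.univ \ {n})
        (fun m => by simp : ∀ m, m ∈ Finset.univ \ {n} ↔ m ≠ n)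
        (fun m => A m (fullIdx n i j m) (fullIdx n c g m))]
      refine Finset.prod_congr rfl fun m _ => ?_
      rw [fullIdx_ne n i j m m.2, fullIdx_ne n c g m m.2]
  rw [hprod]
  ring

end AuxLemmas

/-- **Lower bound for the reconstruction error**: any Tucker reconstruction with core
shape `R` incurs squared error at least `max_n Σ_{i > R_n} (σ_i⁽ⁿ⁾)²` (stated as the
bound holding for every mode `n`), and consequently so does the optimal loss `L(X,R)`. -/
theorem tucker_loss_lower_bound {N : ℕ} {I : Fin N → ℕ} (hI : ∀ n, 1 ≤ I n)
    (X : (∀ k, Fin (I k)) → ℝ)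
    (σ : ∀ n, Fin (I n) → ℝ) (hσ : ∀ n, IsSingularValues (modeUnfold X n) (σ n))
    (R : Fin N → ℕ) (hR : ∀ n, 1 ≤ R n ∧ R n ≤ I n) :
    (∀ (G : (∀ k, Fin (R k)) → ℝ) (A : ∀ n, Matrix (Fin (I n)) (Fin (R n)) ℝ)
      (n : Fin N),
      ∑ i ∈ Finset.univ.filter (fun i : Fin (I n) => R n ≤ (i : ℕ)), σ n i ^ 2 ≤
        frobSq (fun i => X i - tucker G A i)) ∧
    ∀ n : Fin N,
      ∑ i ∈ Finset.univ.filter (fun i : Fin (I n) => R n ≤ (i : ℕ)), σ n i ^ 2 ≤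
        tuckerLoss I X R := by
  classical
  have main : ∀ (G : (∀ k, Fin (R k)) → ℝ) (A : ∀ n, Matrix (Fin (I n)) (Fin (R n)) ℝ)
      (n : Fin N),
      ∑ i ∈ Finset.univ.filter (fun i : Fin (I n) => R n ≤ (i : ℕ)), σ n i ^ 2 ≤
        frobSq (fun i => X i - tucker G A i) := by
    intro G A n
    have hfact := modeUnfold_tucker G A n
    have hfs : frobSq (fun i => X i - tucker G A i) =
        ∑ i, ∑ j, (modeUnfold X n i j - modeUnfold (tucker G A) n i j)^2 := by
      rw [frobSq_unfold (fun i => X i - tucker G A i) n]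
      rfl
    rw [hfs]
    exact key_matrix_aux (hR n).2 (modeUnfold X n) (modeUnfold (tucker G A) n) (σ n) (hσ n)
      (A n) _ hfact
  refine ⟨main, fun n => ?_⟩
  rw [tuckerLoss]
  apply le_csInf
  · exact ⟨frobSq (fun i => X i - tucker (fun _ => 0) (fun _ => 0) i),
      (fun _ => 0), (fun _ => 0), rfl⟩
  · rintro v ⟨G, A, rfl⟩
    exact main G A n
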